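/- Let X and Y be normed vector lattices and let 1 ≤ r ≤ q < ∞. Suppose X and Y each satisfy a lower q-estimate with constant 1: for every finite family x_1, …, x_n of pairwise disjoint elements (|x_i| ∧ |x_j| = 0 for i ≠ j), ‖Σ_{i=1}^n x_i‖ ≥ (Σ_{i=1}^n ‖x_i‖^q)^{1/q}. Then the direct sum X ⊕_r Y, i.e. the product X × Y with coordinatewise order and norm ‖(x,y)‖ = (‖x‖^r + ‖y‖^r)^{1/r}, also satisfies a lower q-estimate with constant 1. -/

import Mathlib

/-- If normed vector lattices `X` and `Y` both satisfy a lower `q`-estimate with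
constant 1 and `1 ≤ r ≤ q < ∞`, then the direct sum `X ⊕_r Y` (the product with
coordinatewise order and norm `‖(x,y)‖ = (‖x‖^r + ‖y‖^r)^{1/r}`) also satisfies a
lower `q`-estimate with constant 1. -/
theorem lower_q_estimate_direct_sum
    {X Y : Type*} [NormedAddCommGroup X] [Lattice X] [IsOrderedAddMonoid X] [HasSolidNorm X]
    [NormedAddCommGroup Y] [Lattice Y] [IsOrderedAddMonoid Y] [HasSolidNorm Y]
    [Module ℝ X] [Module ℝ Y]
    (r q : ℝ) (hr : 1 ≤ r) (hrq : r ≤ q)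
    (hX : ∀ (n : ℕ) (x : Fin n → X), (∀ i j, i ≠ j → |x i| ⊓ |x j| = 0) →
      (∑ i, ‖x i‖ ^ q) ^ (1 / q) ≤ ‖∑ i, x i‖)
    (hY : ∀ (n : ℕ) (y : Fin n → Y), (∀ i j, i ≠ j → |y i| ⊓ |y j| = 0) →
      (∑ i, ‖y i‖ ^ q) ^ (1 / q) ≤ ‖∑ i, y i‖) :
    ∀ (n : ℕ) (z : Fin n → X × Y),
      (∀ i j, i ≠ j → |(z i).1| ⊓ |(z j).1| = 0 ∧ |(z i).2| ⊓ |(z j).2| = 0) →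
      (∑ i, ((‖(z i).1‖ ^ r + ‖(z i).2‖ ^ r) ^ (1 / r)) ^ q) ^ (1 / q)
        ≤ (‖(∑ i, z i).1‖ ^ r + ‖(∑ i, z i).2‖ ^ r) ^ (1 / r) := by
  intro n z hz
  have hq : (1:ℝ) ≤ q := hr.trans hrq
  have hr0 : (0:ℝ) < r := lt_of_lt_of_le one_pos hr
  have hq0 : (0:ℝ) < q := lt_of_lt_of_le one_pos hq
  set a : Fin n → ℝ := fun i => ‖(z i).1‖ with ha
  set b : Fin n → ℝ := fun i => ‖(z i).2‖ with hb
  have ha0 : ∀ i, 0 ≤ a i := fun i => norm_nonneg _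
  have hb0 : ∀ i, 0 ≤ b i := fun i => norm_nonneg _
  set A := ‖(∑ i, z i).1‖ with hA'
  set B := ‖(∑ i, z i).2‖ with hB'
  have hA0 : 0 ≤ A := norm_nonneg _
  have hB0 : 0 ≤ B := norm_nonneg _
  have hSa : (0:ℝ) ≤ ∑ i, a i ^ q := Finset.sum_nonneg fun i _ => Real.rpow_nonneg (ha0 i) _
  have hSb : (0:ℝ) ≤ ∑ i, b i ^ q := Finset.sum_nonneg fun i _ => Real.rpow_nonneg (hb0 i) _
  have hA : (∑ i, a i ^ q) ^ (1 / q) ≤ A := by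
    have := hX n (fun i => (z i).1) (fun i j hij => (hz i j hij).1)
    simpa [hA', Prod.fst_sum] using this
  have hB : (∑ i, b i ^ q) ^ (1 / q) ≤ B := by
    have := hY n (fun i => (z i).2) (fun i j hij => (hz i j hij).2)
    simpa [hB', Prod.snd_sum] using this
  -- rewrite each term using exponent s = q / r
  set s : ℝ := q / r with hs
  have hs1 : (1:ℝ) ≤ s := (one_le_div hr0).2 hrq
  have habnn : ∀ i, (0:ℝ) ≤ a i ^ r + b i ^ r := fun i =>
    add_nonneg (Real.rpow_nonneg (ha0 i) _) (Real.rpow_nonneg (hb0 i) _)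
  have hterm : ∀ i, ((a i ^ r + b i ^ r) ^ (1/r)) ^ q = (a i ^ r + b i ^ r) ^ s := by
    intro i
    rw [← Real.rpow_mul (habnn i), one_div, inv_mul_eq_div]
  -- Minkowski with exponent s
  have M := Real.Lp_add_le_of_nonneg (s := Finset.univ) (f := fun i => a i ^ r)
      (g := fun i => b i ^ r) hs1 (fun i _ => Real.rpow_nonneg (ha0 i) _)
      (fun i _ => Real.rpow_nonneg (hb0 i) _)
  have hpow : ∀ (c : Fin n → ℝ), (∀ i, 0 ≤ c i) → (∑ i, (c i ^ r) ^ s) = ∑ i, c i ^ q := by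
    intro c hc
    refine Finset.sum_congr rfl fun i _ => ?_
    rw [← Real.rpow_mul (hc i), hs, mul_div_cancel₀ _ (ne_of_gt hr0)]
  rw [hpow a ha0, hpow b hb0] at M
  -- bound the right side of M
  have hAr : (∑ i, a i ^ q) ^ (1 / s) ≤ A ^ r := by
    have : ((∑ i, a i ^ q) ^ (1/q)) ^ r ≤ A ^ r :=
      Real.rpow_le_rpow (Real.rpow_nonneg hSa _) hA (le_of_lt hr0)
    rwa [← Real.rpow_mul hSa, show (1/q) * r = 1/s by rw [hs]; field_simp] at this
  have hBr : (∑ i, b i ^ q) ^ (1 / s) ≤ B ^ r := by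
    have : ((∑ i, b i ^ q) ^ (1/q)) ^ r ≤ B ^ r :=
      Real.rpow_le_rpow (Real.rpow_nonneg hSb _) hB (le_of_lt hr0)
    rwa [← Real.rpow_mul hSb, show (1/q) * r = 1/s by rw [hs]; field_simp] at this
  have M2 : (∑ i, (a i ^ r + b i ^ r) ^ s) ^ (1 / s) ≤ A ^ r + B ^ r :=
    M.trans (add_le_add hAr hBr)
  -- finish: raise to power 1/r
  have hSnn : (0:ℝ) ≤ ∑ i, (a i ^ r + b i ^ r) ^ s :=
    Finset.sum_nonneg fun i _ => Real.rpow_nonneg (habnn i) _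
  calc (∑ i, ((a i ^ r + b i ^ r) ^ (1/r)) ^ q) ^ (1/q)
      = ((∑ i, (a i ^ r + b i ^ r) ^ s) ^ (1/s)) ^ (1/r) := by
        rw [← Real.rpow_mul hSnn]
        congr 1
        · exact Finset.sum_congr rfl fun i _ => hterm i
        · rw [hs]; field_simp
    _ ≤ (A ^ r + B ^ r) ^ (1/r) :=
        Real.rpow_le_rpow (Real.rpow_nonneg hSnn _) M2 (by positivity)
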